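/- Let n ≥ 1, let 𝕊_n be the symmetric group on n letters and S ⊆ 𝕊_n an inverse-closed subset. Let (π^α)_{α∈A} be a finite family of pairwise non-unitarily-equivalent irreducible unitary representations of 𝕊_n, of dimensions d_α, such that every irreducible unitary representation of 𝕊_n is unitarily equivalent to some π^α. For each α ∈ A, each 1 ≤ i ≤ d_α, and each eigenvalue λ of π^α(S), let F^{α,λ}_i be a finite family of vectors in E_λ(π^α(S)) which is a frame for E_λ(π^α(S)). Then the collection Φ = {Θ̃_{π^α,i,λ}(ψ) : α ∈ A, 1 ≤ i ≤ d_α, λ an eigenvalue of π^α(S), ψ ∈ F^{α,λ}_i} is a frame for L²(𝕊_n), and every element of Φ belongs to Z_{π^α,i,λ} for some α, i and eigenvalue λ of π^α(S). -/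

import Mathlib

open scoped BigOperators

noncomputable section

/-- A unitary representation of a group `G` of dimension `d`: a group homomorphism from `G`
into the group of `d × d` complex unitary matrices. -/
abbrev URep (G : Type*) [Group G] (d : ℕ) : Type _ :=
  G →* Matrix.unitaryGroup (Fin d) ℂ

/-- A unitary representation is irreducible if its dimension is positive and the only
subspaces `W ⊆ ℂ^d` with `π(g)W ⊆ W` for all `g` are `{0}` and `ℂ^d`. -/
def URepIrreducible {G : Type*} [Group G] {d : ℕ} (π : URep G d) : Prop :=
  0 < d ∧ ∀ W : Submodule ℂ (Fin d → ℂ),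
    (∀ g : G, ∀ ξ ∈ W, ((π g : Matrix (Fin d) (Fin d) ℂ)).mulVec ξ ∈ W) → W = ⊥ ∨ W = ⊤

/-- The coefficient function `π_{j,i}(g) = (π(g))_{i,j}`. -/
def coeff {G : Type*} [Group G] {d : ℕ} (π : URep G d) (j i : Fin d) : G → ℂ :=
  fun g => (π g : Matrix (Fin d) (Fin d) ℂ) i j

/-- The subspace `E_{π,i} = span{π_{j,i} : 1 ≤ j ≤ d}` of `L²(G)`. -/
def Esp {G : Type*} [Group G] {d : ℕ} (π : URep G d) (i : Fin d) : Submodule ℂ (G → ℂ) :=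
  Submodule.span ℂ (Set.range fun j : Fin d => coeff π j i)

/-- Unitary equivalence of two unitary representations: the dimensions agree and there is a
unitary matrix `U` with `U⁻¹ π(g) U = σ(g)` for all `g`. -/
def UEquiv {G : Type*} [Group G] {d d' : ℕ} (π : URep G d) (σ : URep G d') : Prop :=
  ∃ h : d = d', ∃ U : Matrix (Fin d') (Fin d') ℂ, U ∈ Matrix.unitaryGroup (Fin d') ℂ ∧
    ∀ g : G, U⁻¹ * (Matrix.reindex (finCongr h) (finCongr h)
        ((π g : Matrix (Fin d) (Fin d) ℂ))) * U = (σ g : Matrix (Fin d') (Fin d') ℂ)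

/-- `π(S) = ∑_{a ∈ S} π(a)`. -/
def repSum {G : Type*} [Group G] {d : ℕ} (π : URep G d) (S : Finset G) :
    Matrix (Fin d) (Fin d) ℂ :=
  ∑ a ∈ S, (π a : Matrix (Fin d) (Fin d) ℂ)

/-- `X` is a `λ`-eigenvector (possibly zero) of `M`: `M X = λ X`. -/
def IsEigvec {d : ℕ} (M : Matrix (Fin d) (Fin d) ℂ) (lam : ℝ) (X : Fin d → ℂ) : Prop :=
  M.mulVec X = (lam : ℂ) • X

/-- `λ` is an eigenvalue of `M`. -/
def IsEigval {d : ℕ} (M : Matrix (Fin d) (Fin d) ℂ) (lam : ℝ) : Prop :=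
  ∃ X : Fin d → ℂ, X ≠ 0 ∧ IsEigvec M lam X

/-- The `λ`-eigenspace `E_λ(M)` as a submodule of `ℂ^d`. -/
def eigSp {d : ℕ} (M : Matrix (Fin d) (Fin d) ℂ) (lam : ℝ) : Submodule ℂ (Fin d → ℂ) :=
  LinearMap.ker (M.mulVecLin - (lam : ℂ) • LinearMap.id)

/-- The inner ℂ product `⟨u, v⟩ = ∑ u(x) conj(v(x))`, linear in the first variable
(the convention of the paper). -/
def dotC {X : Type*} [Fintype X] (u v : X → ℂ) : ℂ :=
  ∑ x, u x * (starRingEnd ℂ) (v x)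

/-- The squared norm `‖u‖² = ∑ |u(x)|²`. -/
def norm2 {X : Type*} [Fintype X] (u : X → ℂ) : ℝ :=
  ∑ x, Complex.normSq (u x)

/-- The map `Θ_{π,i} : X ↦ ∑_k X_k π_{k,i}`. -/
def Theta {G : Type*} [Group G] {d : ℕ} (π : URep G d) (i : Fin d)
    (X : Fin d → ℂ) : G → ℂ :=
  fun g => ∑ k, X k * coeff π k i g

/-- The map `Θ_{π,i}` as a linear map. -/
def ThetaL {G : Type*} [Group G] {d : ℕ} (π : URep G d) (i : Fin d) :
    (Fin d → ℂ) →ₗ[ℂ] (G → ℂ) where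
  toFun X := fun g => ∑ k, X k * coeff π k i g
  map_add' X Y := by
    funext g
    simp [add_mul, Finset.sum_add_distrib]
  map_smul' c X := by
    funext g
    simp [Finset.mul_sum, mul_assoc]

/-- The space `Z_{π,i,λ} = {∑_k X_k π_{k,i} : X ∈ E_λ(π(S))}`. -/
def Zset {G : Type*} [Group G] {d : ℕ} (π : URep G d) (i : Fin d) (lam : ℝ) (S : Finset G) :
    Set (G → ℂ) :=
  {f | ∃ X : Fin d → ℂ, IsEigvec (repSum π S) lam X ∧ f = Theta π i X}

/-- The normalized map `Θ̃_{π,i} = √(d/n!) Θ_{π,i}` for the symmetric group `𝕊_n`. -/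
def ThetaT (n : ℕ) {d : ℕ} (π : URep (Equiv.Perm (Fin n)) d) (i : Fin d)
    (X : Fin d → ℂ) : Equiv.Perm (Fin n) → ℂ :=
  fun g => (Real.sqrt (d / n.factorial) : ℂ) * Theta π i X g

/-- `ψ` is a frame for `W` with lower bound `A` and upper bound `B`:
`A‖v‖² ≤ ∑_t |⟨v, ψ_t⟩|² ≤ B‖v‖²` for all `v ∈ W`. -/
def IsFrameOn {X ι : Type*} [Fintype X] [Fintype ι] (ψ : ι → (X → ℂ)) (W : Set (X → ℂ))
    (A B : ℝ) : Prop :=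
  0 < A ∧ A ≤ B ∧ (∀ t, ψ t ∈ W) ∧
    ∀ v ∈ W, A * norm2 v ≤ ∑ t, Complex.normSq (dotC v (ψ t)) ∧
      ∑ t, Complex.normSq (dotC v (ψ t)) ≤ B * norm2 v

/-- `ψ` is a frame for `W` (for some frame bounds `0 < A ≤ B`). -/
def IsFrameIn {X ι : Type*} [Fintype X] [Fintype ι] (ψ : ι → (X → ℂ)) (W : Set (X → ℂ)) :
    Prop :=
  ∃ A B : ℝ, IsFrameOn ψ W A B



set_option linter.unusedSectionVars false
set_option maxHeartbeats 1000000
open Module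

section AuxFrame
variable {X : Type*} [Fintype X]

def toE (u : X → ℂ) : EuclideanSpace ℂ X := (WithLp.equiv 2 _).symm u

lemma dotC_eq_inner (u v : X → ℂ) : dotC u v = (inner ℂ (toE v) (toE u) : ℂ) := by
  rw [PiLp.inner_apply]
  simp only [RCLike.inner_apply]
  exact Finset.sum_congr rfl fun x _ => rfl

lemma norm2_eq (u : X → ℂ) : norm2 u = ‖toE u‖ ^ 2 := by
  rw [EuclideanSpace.norm_eq, Real.sq_sqrt (by positivity)]
  refine Finset.sum_congr rfl fun x _ => ?_
  rw [Complex.normSq_eq_norm_sq]; rfl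

lemma normSq_eq_norm_sq (z : ℂ) : Complex.normSq z = ‖z‖ ^ 2 := by
  rw [Complex.normSq_eq_norm_sq]

/-- Lemma C: a finite spanning family is a frame for the whole space. -/
lemma span_top_isFrame {ι : Type*} [Fintype ι] (ψ : ι → (X → ℂ))
    (hspan : Submodule.span ℂ (Set.range fun t => toE (ψ t)) = ⊤) :
    IsFrameIn ψ (Set.univ) := by
  classical
  -- analysis operator
  let L : EuclideanSpace ℂ X →ₗ[ℂ] EuclideanSpace ℂ ι :=
    { toFun := fun v => WithLp.toLp 2 (fun t => (inner ℂ (toE (ψ t)) v : ℂ))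
      map_add' := fun u v => by ext t; simp [inner_add_right]
      map_smul' := fun c v => by ext t; simp [inner_smul_right] }
  have hLnorm : ∀ v : EuclideanSpace ℂ X, ‖L v‖ ^ 2 = ∑ t, Complex.normSq (L v t) := by
    intro v
    rw [EuclideanSpace.norm_eq, Real.sq_sqrt (by positivity)]
    exact Finset.sum_congr rfl fun t _ => (normSq_eq_norm_sq _).symm
  have hinj : Function.Injective L := by
    rw [← LinearMap.ker_eq_bot, eq_bot_iff]
    intro v hv
    simp only [LinearMap.mem_ker] at hv
    have h0 : ∀ t, (inner ℂ (toE (ψ t)) v : ℂ) = 0 := fun t => congrArg (fun w => w t) hv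
    have : v ∈ (Submodule.span ℂ (Set.range fun t => toE (ψ t)))ᗮ := by
      rw [Submodule.mem_orthogonal]
      intro u hu
      induction hu using Submodule.span_induction with
      | mem u hu => obtain ⟨t, rfl⟩ := hu; exact h0 t
      | zero => simp
      | add u w _ _ hu hw => rw [inner_add_left, hu, hw, add_zero]
      | smul c u _ hu => rw [inner_smul_left, hu, mul_zero]
    rw [hspan, Submodule.top_orthogonal_eq_bot] at this
    exact this
  -- lower bound via continuous linear equiv onto range
  let e : EuclideanSpace ℂ X ≃ₗ[ℂ] LinearMap.range L := LinearEquiv.ofInjective L hinj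
  let ec := e.toContinuousLinearEquiv
  set C : ℝ := max ‖(ec.symm : LinearMap.range L →L[ℂ] EuclideanSpace ℂ X)‖ 1 with hC
  have hC1 : 1 ≤ C := le_max_right _ _
  have hC0 : 0 < C := lt_of_lt_of_le one_pos hC1
  have hlow : ∀ v : EuclideanSpace ℂ X, ‖v‖ ≤ C * ‖L v‖ := by
    intro v
    have h1 : v = ec.symm (ec v) := (ec.symm_apply_apply v).symm
    have h2 : ‖(ec v : EuclideanSpace ℂ ι)‖ = ‖L v‖ := by
      congr 1
    calc ‖v‖ = ‖ec.symm (ec v)‖ := by rw [← h1]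
      _ ≤ ‖(ec.symm : LinearMap.range L →L[ℂ] EuclideanSpace ℂ X)‖ * ‖(ec v : LinearMap.range L)‖ :=
          (ec.symm : LinearMap.range L →L[ℂ] EuclideanSpace ℂ X).le_opNorm _
      _ ≤ C * ‖(ec v : LinearMap.range L)‖ := by
          apply mul_le_mul_of_nonneg_right (le_max_left _ _) (norm_nonneg _)
      _ = C * ‖L v‖ := by rw [← h2]; rfl
  let Lc := LinearMap.toContinuousLinearMap L
  have hup : ∀ v : EuclideanSpace ℂ X, ‖L v‖ ≤ ‖Lc‖ * ‖v‖ := fun v => Lc.le_opNorm v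
  refine ⟨C⁻¹ ^ 2, max (C⁻¹ ^ 2) (‖Lc‖ ^ 2), by positivity, le_max_left _ _, fun t => trivial,
    fun v _ => ?_⟩
  have key : ∑ t, Complex.normSq (dotC v (ψ t)) = ‖L (toE v)‖ ^ 2 := by
    rw [hLnorm]
    exact Finset.sum_congr rfl fun t _ => by rw [dotC_eq_inner]; rfl
  constructor
  · rw [key, norm2_eq]
    have h := hlow (toE v)
    have h2 : ‖toE v‖ ^ 2 ≤ C ^ 2 * ‖L (toE v)‖ ^ 2 := by nlinarith [norm_nonneg (toE v), norm_nonneg (L (toE v))]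
    have hC2 : (0:ℝ) < C ^ 2 := by positivity
    rw [inv_pow]
    rw [inv_mul_le_iff₀ hC2] at *
    linarith [h2]
  · rw [key, norm2_eq]
    have h := hup (toE v)
    have : ‖L (toE v)‖ ^ 2 ≤ ‖Lc‖ ^ 2 * ‖toE v‖ ^ 2 := by nlinarith [norm_nonneg (toE v), norm_nonneg (Lc), norm_nonneg (L (toE v))]
    calc ‖L (toE v)‖ ^ 2 ≤ ‖Lc‖ ^ 2 * ‖toE v‖ ^ 2 := this
      _ ≤ max (C⁻¹ ^ 2) (‖Lc‖ ^ 2) * ‖toE v‖ ^ 2 := by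
          apply mul_le_mul_of_nonneg_right (le_max_right _ _) (by positivity)

/-- Lemma D: a frame for (the carrier of) a submodule spans it. -/
lemma frame_span {ι : Type*} [Fintype ι] (ψ : ι → (X → ℂ))
    (W : Submodule ℂ (EuclideanSpace ℂ X)) {A B : ℝ}
    (hf : IsFrameOn ψ {v | toE v ∈ W} A B) :
    W ≤ Submodule.span ℂ (Set.range fun t => toE (ψ t)) := by
  classical
  obtain ⟨hA, hAB, hmem, hbd⟩ := hf
  set K := Submodule.span ℂ (Set.range fun t => toE (ψ t)) with hK
  intro v hv
  set q : EuclideanSpace ℂ X := v - K.orthogonalProjectionOnto v with hq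
  have hqK : q ∈ Kᗮ := K.sub_starProjection_mem_orthogonal v
  have hKW : K ≤ W := by
    rw [hK, Submodule.span_le]
    rintro _ ⟨t, rfl⟩; exact hmem t
  have hqW : toE q ∈ W := by
    have : (K.orthogonalProjectionOnto v : EuclideanSpace ℂ X) ∈ W :=
      hKW (K.orthogonalProjectionOnto v).2
    exact W.sub_mem hv this
  have hzero : ∀ t, dotC q (ψ t) = 0 := by
    intro t
    rw [dotC_eq_inner]
    have : toE (ψ t) ∈ K := Submodule.subset_span ⟨t, rfl⟩
    exact (Submodule.mem_orthogonal K q).mp hqK _ this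
  have h0 := (hbd q hqW).1
  have hsum0 : ∑ t, Complex.normSq (dotC q (ψ t)) = 0 := by
    refine Finset.sum_eq_zero fun t _ => ?_
    rw [hzero t]; simp
  rw [hsum0] at h0
  have hn2 : norm2 q = 0 := by
    have := norm2_eq q
    nlinarith [sq_nonneg ‖toE q‖, norm_nonneg (toE q)]
  have hq0 : q = 0 := by
    rw [norm2_eq] at hn2
    have : ‖toE q‖ = 0 := by nlinarith [norm_nonneg (toE q)]
    have h := norm_eq_zero.mp this
    exact h
  have : v = (K.orthogonalProjectionOnto v : EuclideanSpace ℂ X) := by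
    have := sub_eq_zero.mp hq0
    exact this
  rw [this]
  exact (K.orthogonalProjectionOnto v).2

end AuxFrame

section AuxHerm
variable {G : Type*} [Group G] {d : ℕ}

lemma URep_star (π : URep G d) (a : G) :
    star ((π a : Matrix (Fin d) (Fin d) ℂ)) = (π a⁻¹ : Matrix (Fin d) (Fin d) ℂ) := by
  have h1 : star ((π a : Matrix (Fin d) (Fin d) ℂ)) * (π a : Matrix (Fin d) (Fin d) ℂ) = 1 :=
    (π a).2.1
  have h2 : (π a⁻¹ : Matrix (Fin d) (Fin d) ℂ) * (π a : Matrix (Fin d) (Fin d) ℂ) = 1 := by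
    have : ((π a⁻¹ * π a : Matrix.unitaryGroup (Fin d) ℂ) : Matrix (Fin d) (Fin d) ℂ) = 1 := by
      rw [← map_mul, inv_mul_cancel, map_one]; rfl
    simpa using this
  have h3 : (π a : Matrix (Fin d) (Fin d) ℂ) * star ((π a : Matrix (Fin d) (Fin d) ℂ)) = 1 :=
    mul_eq_one_comm.mp h1
  calc star ((π a : Matrix (Fin d) (Fin d) ℂ))
      = 1 * star ((π a : Matrix (Fin d) (Fin d) ℂ)) := (one_mul _).symm
    _ = (π a⁻¹ : Matrix (Fin d) (Fin d) ℂ) * ((π a : Matrix (Fin d) (Fin d) ℂ) * star _) := by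
        rw [← h2, mul_assoc]
    _ = (π a⁻¹ : Matrix (Fin d) (Fin d) ℂ) := by rw [h3, mul_one]

lemma repSum_isHermitian (π : URep G d) (S : Finset G) (hS : ∀ s ∈ S, s⁻¹ ∈ S) :
    (repSum π S).IsHermitian := by
  unfold Matrix.IsHermitian repSum
  rw [Matrix.conjTranspose_sum]
  refine (Finset.sum_nbij' (fun a => a⁻¹) (fun a => a⁻¹) (fun a ha => hS a ha)
    (fun a ha => hS a ha) (fun a _ => inv_inv a) (fun a _ => inv_inv a) ?_).symm
  intro a ha
  rw [← URep_star π a, ← Matrix.star_eq_conjTranspose, star_star]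

/-- Every vector is a span of eigenvectors of a Hermitian matrix, with eigenvalues
recorded as real numbers. -/
lemma span_eigvecs (M : Matrix (Fin d) (Fin d) ℂ) (hM : M.IsHermitian) :
    Submodule.span ℂ {X : Fin d → ℂ | ∃ lam : ℝ, IsEigval M lam ∧ IsEigvec M lam X} = ⊤ := by
  classical
  set b := hM.eigenvectorBasis
  have hb : ∀ j, ((b j : EuclideanSpace ℂ (Fin d)) : Fin d → ℂ) ∈
      {X : Fin d → ℂ | ∃ lam : ℝ, IsEigval M lam ∧ IsEigvec M lam X} := by
    intro j
    have hev : IsEigvec M (hM.eigenvalues j) (b j) := by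
      have h1 := hM.mulVec_eigenvectorBasis j
      unfold IsEigvec
      refine Eq.trans (by exact h1) ?_
      funext x
      simp only [Pi.smul_apply, PiLp.smul_apply, Complex.real_smul, smul_eq_mul]
      rfl
    have hne : (b j : Fin d → ℂ) ≠ 0 := by
      have := b.orthonormal.1 j
      intro h
      rw [show (b j) = (0 : EuclideanSpace ℂ (Fin d)) from by simpa using h] at this
      simp at this
    exact ⟨hM.eigenvalues j, ⟨b j, hne, hev⟩, hev⟩
  rw [eq_top_iff]
  have hspan : Submodule.span ℂ (Set.range fun j => (b j : EuclideanSpace ℂ (Fin d))) = ⊤ :=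
    b.toBasis.span_eq
  intro v _
  have hv : WithLp.toLp 2 v ∈ (⊤ : Submodule ℂ (EuclideanSpace ℂ (Fin d))) := trivial
  rw [← hspan] at hv
  have hv' := Submodule.mem_map_of_mem (f := (WithLp.linearEquiv 2 ℂ (Fin d → ℂ)).toLinearMap) hv
  rw [Submodule.map_span] at hv'
  refine Submodule.span_mono ?_ hv'
  rintro _ ⟨_, ⟨j, rfl⟩, rfl⟩
  exact hb j

end AuxHerm

section AuxPW
abbrev Esp' (G : Type*) [Fintype G] := EuclideanSpace ℂ G

variable {G : Type*} [Group G] [Fintype G] [DecidableEq G]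

def Lact (g : G) (f : Esp' G) : Esp' G := WithLp.toLp 2 (fun x => f (g⁻¹ * x))
lemma Lact_apply (g : G) (f : Esp' G) (x : G) : Lact g f x = f (g⁻¹ * x) := rfl
lemma Lact_add (g : G) (f h : Esp' G) : Lact g (f + h) = Lact g f + Lact g h := rfl
lemma Lact_smul (g : G) (c : ℂ) (f : Esp' G) : Lact g (c • f) = c • Lact g f := rfl
lemma Lact_comp (g h : G) (f : Esp' G) : Lact g (Lact h f) = Lact (g * h) f := by
  ext x; show f _ = f _; rw [mul_inv_rev, mul_assoc]
lemma Lact_one (f : Esp' G) : Lact 1 f = f := by ext x; show f _ = f x; rw [inv_one, one_mul]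
lemma inner_Lact (g : G) (u v : Esp' G) : (inner ℂ (Lact g u) (Lact g v) : ℂ) = inner ℂ u v := by
  simp only [PiLp.inner_apply, Lact_apply]
  exact Fintype.sum_equiv (Equiv.mulLeft g⁻¹) _ _ (fun x => rfl)
lemma inner_Lact_right (g : G) (u v : Esp' G) :
    (inner ℂ u (Lact g v) : ℂ) = inner ℂ (Lact g⁻¹ u) v := by
  conv_rhs => rw [← inner_Lact g (Lact g⁻¹ u) v, Lact_comp, mul_inv_cancel, Lact_one]
lemma Lact_sum {ι : Type*} (s : Finset ι) (g : G) (f : ι → Esp' G) :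
    Lact g (∑ i ∈ s, f i) = ∑ i ∈ s, Lact g (f i) := by
  induction s using Finset.cons_induction with
  | empty => ext x; simp [Lact]
  | cons a s ha ih => rw [Finset.sum_cons, Finset.sum_cons, Lact_add, ih]
def LInv (W : Submodule ℂ (Esp' G)) : Prop := ∀ g : G, ∀ f ∈ W, Lact g f ∈ W
lemma LInv_orthogonal {W : Submodule ℂ (Esp' G)} (hW : LInv W) : LInv Wᗮ := by
  intro g f hf u hu
  rw [inner_Lact_right]
  exact hf _ (hW g⁻¹ u hu)

section sigma
variable (V : Submodule ℂ (Esp' G))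

def onb : OrthonormalBasis (Fin (finrank ℂ V)) ℂ V := stdOrthonormalBasis ℂ V

def sigMat (g : G) : Matrix (Fin (finrank ℂ V)) (Fin (finrank ℂ V)) ℂ :=
  fun k j => inner ℂ ((onb V k : Esp' G)) (Lact g (onb V j))

lemma onb_inner (k j : Fin (finrank ℂ V)) :
    (inner ℂ ((onb V k : Esp' G)) ((onb V j : Esp' G)) : ℂ) = if k = j then 1 else 0 := by
  have := orthonormal_iff_ite.mp (onb V).orthonormal k j
  exact this

lemma expand_in_onb {f : Esp' G} (hf : f ∈ V) :
    f = ∑ j, (inner ℂ ((onb V j : Esp' G)) f : ℂ) • (onb V j : Esp' G) := by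
  have h := (onb V).sum_repr ⟨f, hf⟩
  have h2 : ∀ j, (onb V).repr ⟨f, hf⟩ j = (inner ℂ ((onb V j : Esp' G)) f : ℂ) := by
    intro j; rw [(onb V).repr_apply_apply]; rfl
  calc f = ((∑ i, (onb V).repr ⟨f, hf⟩ i • onb V i : V) : Esp' G) := by rw [h]
    _ = ∑ i, (onb V).repr ⟨f, hf⟩ i • (onb V i : Esp' G) := by push_cast; rfl
    _ = ∑ i, (inner ℂ ((onb V i : Esp' G)) f : ℂ) • (onb V i : Esp' G) := by simp_rw [h2]

variable {V}

lemma Lact_onb (hV : LInv V) (g : G) (j : Fin (finrank ℂ V)) :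
    Lact g (onb V j : Esp' G) = ∑ k, sigMat V g k j • (onb V k : Esp' G) := by
  have hm : Lact g (onb V j : Esp' G) ∈ V := hV g _ (onb V j).2
  exact expand_in_onb V hm

lemma sigMat_mul (hV : LInv V) (g h : G) :
    sigMat V (g * h) = sigMat V g * sigMat V h := by
  funext k j
  rw [Matrix.mul_apply]
  show (inner ℂ ((onb V k : Esp' G)) (Lact (g*h) (onb V j)) : ℂ) = _
  rw [← Lact_comp, Lact_onb hV h, Lact_sum]
  simp only [Lact_smul]
  rw [inner_sum]
  refine Finset.sum_congr rfl fun l _ => ?_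
  rw [inner_smul_right]
  show sigMat V h l j * sigMat V g k l = _
  ring

lemma sigMat_one : sigMat V 1 = 1 := by
  funext k j
  show (inner ℂ ((onb V k : Esp' G)) (Lact 1 (onb V j)) : ℂ) = _
  rw [Lact_one, onb_inner]
  simp [Matrix.one_apply]

lemma sigMat_star (g : G) : star (sigMat V g) = sigMat V g⁻¹ := by
  funext k j
  show (starRingEnd ℂ) (inner ℂ ((onb V j : Esp' G)) (Lact g (onb V k))) =
    inner ℂ ((onb V k : Esp' G)) (Lact g⁻¹ (onb V j))
  rw [inner_conj_symm]
  rw [← inner_Lact g⁻¹ (Lact g ((onb V k : Esp' G))) ((onb V j : Esp' G)), Lact_comp,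
    inv_mul_cancel, Lact_one]

lemma sigMat_unitary (hV : LInv V) (g : G) :
    sigMat V g ∈ Matrix.unitaryGroup (Fin (finrank ℂ V)) ℂ := by
  constructor
  · rw [sigMat_star, ← sigMat_mul hV, inv_mul_cancel, sigMat_one]
  · rw [sigMat_star, ← sigMat_mul hV, mul_inv_cancel, sigMat_one]

def sigma (hV : LInv V) : URep G (finrank ℂ V) :=
  MonoidHom.mk' (fun g => ⟨sigMat V g, sigMat_unitary hV g⟩)
    (fun g h => Subtype.ext (sigMat_mul hV g h))

end sigma

section irred
variable {V : Submodule ℂ (Esp' G)}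

/-- The synthesis operator from coordinates to `V`. -/
def synth (V : Submodule ℂ (Esp' G)) : (Fin (finrank ℂ V) → ℂ) →ₗ[ℂ] Esp' G where
  toFun X := ∑ j, X j • (onb V j : Esp' G)
  map_add' X Y := by simp [add_smul, Finset.sum_add_distrib]
  map_smul' c X := by simp [Finset.smul_sum, smul_smul]

lemma synth_mem (X : Fin (finrank ℂ V) → ℂ) : synth V X ∈ V := by
  show ∑ j, X j • (onb V j : Esp' G) ∈ V
  exact Submodule.sum_mem _ fun j _ => V.smul_mem _ (onb V j).2

lemma synth_surj {f : Esp' G} (hf : f ∈ V) : ∃ X, synth V X = f :=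
  ⟨fun j => (inner ℂ ((onb V j : Esp' G)) f : ℂ), (expand_in_onb V hf).symm⟩

lemma Lact_synth (hV : LInv V) (g : G) (X : Fin (finrank ℂ V) → ℂ) :
    Lact g (synth V X) = synth V ((sigMat V g).mulVec X) := by
  show Lact g (∑ j, X j • (onb V j : Esp' G)) = ∑ k, (sigMat V g).mulVec X k • (onb V k : Esp' G)
  rw [Lact_sum]
  simp only [Lact_smul, Lact_onb hV, Finset.smul_sum, smul_smul]
  rw [Finset.sum_comm]
  refine Finset.sum_congr rfl fun k _ => ?_
  show _ = (∑ j, sigMat V g k j * X j) • ((onb V k : Esp' G))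
  rw [Finset.sum_smul]
  exact Finset.sum_congr rfl fun j _ => by rw [mul_comm]

lemma sigma_irred (hV : LInv V) (hne : V ≠ ⊥)
    (hmin : ∀ V' ≤ V, LInv V' → V' ≠ ⊥ → V' = V) :
    URepIrreducible (sigma hV) := by
  constructor
  · exact Nat.pos_of_ne_zero fun h => hne (Submodule.finrank_eq_zero.mp h)
  · intro W hW
    by_cases hbot : W = ⊥
    · exact Or.inl hbot
    right
    -- image of W in V
    set V' := Submodule.map (synth V) W with hV'
    have hV'le : V' ≤ V := by
      rintro _ ⟨X, _, rfl⟩; exact synth_mem X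
    have hV'inv : LInv V' := by
      rintro g _ ⟨X, hX, rfl⟩
      exact ⟨(sigMat V g).mulVec X, hW g X hX, (Lact_synth hV g X).symm⟩
    have hV'ne : V' ≠ ⊥ := by
      intro h
      apply hbot
      rw [eq_bot_iff]
      intro X hX
      have h1 : synth V X ∈ V' := ⟨X, hX, rfl⟩
      rw [h, Submodule.mem_bot] at h1
      -- synth injective on X: X k = ⟨b k, synth X⟩
      have h2 : ∀ k, X k = (inner ℂ ((onb V k : Esp' G)) (synth V X) : ℂ) := by
        intro k
        show X k = (inner ℂ ((onb V k : Esp' G)) (∑ j, X j • (onb V j : Esp' G)) : ℂ)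
        rw [inner_sum]
        simp only [inner_smul_right]
        rw [Finset.sum_eq_single k]
        · rw [onb_inner]; simp
        · intro j _ hj; rw [onb_inner]; simp [Ne.symm hj]
        · intro h; exact absurd (Finset.mem_univ k) h
      have : X = 0 := by
        funext k; rw [h2 k, h1, inner_zero_right]; rfl
      simpa [this] using Submodule.zero_mem _
    have hVV : V' = V := hmin V' hV'le hV'inv hV'ne
    -- finrank argument
    have h1 : finrank ℂ V ≤ finrank ℂ W := by
      have h3 := Submodule.finrank_map_le (synth V) W
      rw [← hV', hVV] at h3
      exact h3
    have ham : finrank ℂ (Fin (finrank ℂ V) → ℂ) = finrank ℂ V := Module.finrank_fin_fun ℂ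
    exact Submodule.eq_top_of_finrank_eq
      (le_antisymm W.finrank_le (by rw [ham]; exact h1))
end irred

section conj
variable {d : ℕ}

def conjMat (M : Matrix (Fin d) (Fin d) ℂ) : Matrix (Fin d) (Fin d) ℂ :=
  M.map (starRingEnd ℂ)

lemma conjMat_mul (M N : Matrix (Fin d) (Fin d) ℂ) :
    conjMat (M * N) = conjMat M * conjMat N := Matrix.map_mul

lemma conjMat_one : conjMat (1 : Matrix (Fin d) (Fin d) ℂ) = 1 :=
  Matrix.map_one _ (map_zero _) (map_one _)

lemma conjMat_star (M : Matrix (Fin d) (Fin d) ℂ) :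
    star (conjMat M) = conjMat (star M) := by
  funext i j
  simp [conjMat, Matrix.conjTranspose_apply, Matrix.star_apply]

lemma conjMat_unitary {M : Matrix (Fin d) (Fin d) ℂ} (h : M ∈ Matrix.unitaryGroup (Fin d) ℂ) :
    conjMat M ∈ Matrix.unitaryGroup (Fin d) ℂ := by
  constructor
  · rw [conjMat_star, ← conjMat_mul, h.1, conjMat_one]
  · rw [conjMat_star, ← conjMat_mul, h.2, conjMat_one]

def conjRep {G : Type*} [Group G] (σ : URep G d) : URep G d :=
  MonoidHom.mk' (fun g => ⟨conjMat (σ g : Matrix (Fin d) (Fin d) ℂ), conjMat_unitary (σ g).2⟩)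
    (fun g h => Subtype.ext (by
      show conjMat ((σ (g * h) : Matrix (Fin d) (Fin d) ℂ)) = _
      rw [map_mul σ]
      exact conjMat_mul _ _))

lemma conjRep_apply {G : Type*} [Group G] (σ : URep G d) (g : G) (i j : Fin d) :
    (conjRep σ g : Matrix (Fin d) (Fin d) ℂ) i j =
      (starRingEnd ℂ) ((σ g : Matrix (Fin d) (Fin d) ℂ) i j) := rfl

/-- the conjugation-semilinear map on coordinates -/
def conjL : (Fin d → ℂ) →ₛₗ[starRingEnd ℂ] (Fin d → ℂ) where
  toFun X := fun i => (starRingEnd ℂ) (X i)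
  map_add' X Y := by funext i; simp
  map_smul' c X := by funext i; simp [mul_comm]

lemma conjRep_irred {G : Type*} [Group G] {σ : URep G d} (h : URepIrreducible σ) :
    URepIrreducible (conjRep σ) := by
  refine ⟨h.1, fun W hW => ?_⟩
  have := h.2 (Submodule.map conjL W) (by
    rintro g _ ⟨X, hX, rfl⟩
    refine ⟨(conjRep σ g : Matrix (Fin d) (Fin d) ℂ).mulVec X, hW g X hX, ?_⟩
    funext i
    show (starRingEnd ℂ) (((conjRep σ g : Matrix (Fin d) (Fin d) ℂ)).mulVec X i) =
      ((σ g : Matrix (Fin d) (Fin d) ℂ)).mulVec (fun k => (starRingEnd ℂ) (X k)) i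
    rw [Matrix.mulVec, Matrix.mulVec, dotProduct, dotProduct, map_sum]
    refine Finset.sum_congr rfl fun j _ => ?_
    rw [map_mul, conjRep_apply, Complex.conj_conj])
  have hinv : ∀ X : Fin d → ℂ, conjL (conjL X) = X := by
    intro X; funext i
    simp [conjL]
  rcases this with h' | h'
  · left
    rw [eq_bot_iff]
    intro X hX
    have : conjL X ∈ Submodule.map conjL W := ⟨X, hX, rfl⟩
    rw [h', Submodule.mem_bot] at this
    have : conjL (conjL X) = conjL 0 := by rw [this]
    rw [hinv] at this
    rw [this]
    simp only [map_zero]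
    exact Submodule.zero_mem ⊥
  · right
    rw [eq_top_iff]
    intro X _
    have : conjL X ∈ (⊤ : Submodule ℂ (Fin d → ℂ)) := trivial
    rw [← h'] at this
    obtain ⟨Y, hY, hYX⟩ := this
    have : X = conjL (conjL X) := (hinv X).symm
    rw [← hYX, hinv] at this
    rwa [this]
end conj

section uequiv
variable {H : Type*} [Group H]

lemma coeff_mem_of_uequiv {d d' : ℕ} (σ : URep H d) (π' : URep H d')
    (h : UEquiv σ π') (K : Submodule ℂ (H → ℂ)) (hK : ∀ p q, coeff π' p q ∈ K)
    (k j : Fin d) : coeff σ k j ∈ K := by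
  obtain ⟨hd, U, hU, hEq⟩ := h
  have hUinv : U⁻¹ = star U := Matrix.inv_eq_left_inv hU.1
  have hre : ∀ g : H, (Matrix.reindex (finCongr hd) (finCongr hd)
      ((σ g : Matrix (Fin d) (Fin d) ℂ))) = U * (π' g : Matrix (Fin d') (Fin d') ℂ) * star U := by
    intro g
    have h1 := hEq g
    have hl : U * U⁻¹ = 1 := by rw [hUinv]; exact hU.2
    calc Matrix.reindex (finCongr hd) (finCongr hd) ((σ g : Matrix (Fin d) (Fin d) ℂ))
        = 1 * Matrix.reindex (finCongr hd) (finCongr hd) ((σ g : Matrix (Fin d) (Fin d) ℂ)) *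
            (U * U⁻¹) := by rw [hl, one_mul, mul_one]
      _ = U * (U⁻¹ * Matrix.reindex (finCongr hd) (finCongr hd)
            ((σ g : Matrix (Fin d) (Fin d) ℂ)) * U) * U⁻¹ := by
          rw [← hl]; simp only [mul_assoc]
      _ = U * (π' g : Matrix (Fin d') (Fin d') ℂ) * star U := by rw [h1, hUinv, mul_assoc]
  have hcoeff : coeff σ k j = fun g =>
      ∑ p, ∑ q, U (finCongr hd j) p * (π' g : Matrix (Fin d') (Fin d') ℂ) p q *
        (starRingEnd ℂ) (U (finCongr hd k) q) := by
    funext g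
    have h2 : (σ g : Matrix (Fin d) (Fin d) ℂ) j k =
        (Matrix.reindex (finCongr hd) (finCongr hd) ((σ g : Matrix (Fin d) (Fin d) ℂ)))
          (finCongr hd j) (finCongr hd k) := by
      simp [Matrix.reindex_apply]
    show (σ g : Matrix (Fin d) (Fin d) ℂ) j k = _
    rw [h2, hre g]
    simp only [Matrix.mul_apply, Matrix.conjTranspose_apply, Finset.sum_mul]
    rw [Finset.sum_comm]
    refine Finset.sum_congr rfl fun p _ => Finset.sum_congr rfl fun q _ => ?_
    rfl
  rw [hcoeff]
  have : (fun g => ∑ p, ∑ q, U (finCongr hd j) p * (π' g : Matrix (Fin d') (Fin d') ℂ) p q *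
        (starRingEnd ℂ) (U (finCongr hd k) q)) =
      ∑ p, ∑ q, (U (finCongr hd j) p * (starRingEnd ℂ) (U (finCongr hd k) q)) •
        coeff π' q p := by
    funext g
    rw [Finset.sum_apply]
    refine Finset.sum_congr rfl fun p _ => ?_
    rw [Finset.sum_apply]
    refine Finset.sum_congr rfl fun q _ => ?_
    show _ = (_ * _) * coeff π' q p g
    unfold coeff
    ring
  rw [this]
  exact Submodule.sum_mem _ fun p _ => Submodule.sum_mem _ fun q _ =>
    Submodule.smul_mem _ _ (hK q p)
end uequiv

section main
variable {A : Type*} {dfam : A → ℕ} (π : ∀ α : A, URep G (dfam α))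

def Cspan : Submodule ℂ (G → ℂ) :=
  Submodule.span ℂ {f : G → ℂ | ∃ α p q, f = coeff (π α) p q}

lemma coeff_mem_Cspan (α : A) (p q : Fin (dfam α)) : coeff (π α) p q ∈ Cspan π :=
  Submodule.subset_span ⟨α, p, q, rfl⟩

lemma minimal_le_Cspan
    (hcomp : ∀ (d' : ℕ) (σ : URep G d'), URepIrreducible σ → ∃ α, UEquiv σ (π α))
    {V : Submodule ℂ (Esp' G)} (hV : LInv V) (hne : V ≠ ⊥)
    (hmin : ∀ V' ≤ V, LInv V' → V' ≠ ⊥ → V' = V) :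
    ∀ f ∈ V, (f : G → ℂ) ∈ Cspan π := by
  set τ := conjRep (sigma hV) with hτ
  have hτirr : URepIrreducible τ := conjRep_irred (sigma_irred hV hne hmin)
  obtain ⟨α, heq⟩ := hcomp _ τ hτirr
  have hcoeffτ : ∀ k j, coeff τ k j ∈ Cspan π :=
    fun k j => coeff_mem_of_uequiv τ (π α) heq _ (coeff_mem_Cspan π α) k j
  intro f hf
  have key : (f : G → ℂ) = ∑ j, ∑ k,
      ((inner ℂ ((onb V j : Esp' G)) f : ℂ) * (onb V k : Esp' G) 1) • coeff τ k j := by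
    funext g
    have h0 : f g = Lact g⁻¹ f 1 := by rw [Lact_apply, inv_inv, mul_one]
    have h1 : Lact g⁻¹ f =
        ∑ j, (inner ℂ ((onb V j : Esp' G)) f : ℂ) • Lact g⁻¹ (onb V j : Esp' G) := by
      conv_lhs => rw [expand_in_onb V hf]
      rw [Lact_sum]; simp only [Lact_smul]
    have h2 : ∀ j, Lact g⁻¹ (onb V j : Esp' G) = ∑ k, sigMat V g⁻¹ k j • (onb V k : Esp' G) :=
      fun j => Lact_onb hV g⁻¹ j
    have h3 : ∀ k j, sigMat V g⁻¹ k j = coeff τ k j g := by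
      intro k j
      rw [← sigMat_star]
      show (star (sigMat V g)) k j = (conjRep (sigma hV) g : _) j k
      rw [conjRep_apply]
      rw [Matrix.star_apply]
      rfl
    rw [h0, h1]
    rw [WithLp.ofLp_sum, Finset.sum_apply]
    rw [Finset.sum_apply]
    refine Finset.sum_congr rfl fun j _ => ?_
    rw [WithLp.ofLp_smul, Pi.smul_apply, h2 j, WithLp.ofLp_sum, Finset.sum_apply, smul_eq_mul, Finset.mul_sum, Finset.sum_apply]
    refine Finset.sum_congr rfl fun k _ => ?_
    rw [WithLp.ofLp_smul, Pi.smul_apply, Pi.smul_apply, smul_eq_mul, smul_eq_mul, h3 k j]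
    ring
  rw [key]
  exact Submodule.sum_mem _ fun j _ => Submodule.sum_mem _ fun k _ =>
    Submodule.smul_mem _ _ (hcoeffτ k j)

lemma linv_le_Cspan
    (hcomp : ∀ (d' : ℕ) (σ : URep G d'), URepIrreducible σ → ∃ α, UEquiv σ (π α)) :
    ∀ (m : ℕ) (W : Submodule ℂ (Esp' G)), finrank ℂ W ≤ m → LInv W →
      ∀ f ∈ W, (f : G → ℂ) ∈ Cspan π := by
  intro m
  induction m with
  | zero =>
    intro W hr hInv f hf
    have hW : W = ⊥ := Submodule.finrank_eq_zero.mp (Nat.le_zero.mp hr)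
    rw [hW, Submodule.mem_bot] at hf
    rw [hf]
    exact Submodule.zero_mem _
  | succ m ih =>
    intro W hr hInv f hf
    by_cases hbot : W = ⊥
    · rw [hbot, Submodule.mem_bot] at hf
      rw [hf]; exact Submodule.zero_mem _
    classical
    have hex : ∃ r, ∃ V : Submodule ℂ (Esp' G),
        (V ≤ W ∧ LInv V ∧ V ≠ ⊥) ∧ finrank ℂ V = r :=
      ⟨finrank ℂ W, W, ⟨le_rfl, hInv, hbot⟩, rfl⟩
    obtain ⟨V₀, ⟨hV₀W, hV₀inv, hV₀ne⟩, hV₀rank⟩ := Nat.find_spec hex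
    have hmin : ∀ V' ≤ V₀, LInv V' → V' ≠ ⊥ → V' = V₀ := by
      intro V' hle hinv' hne'
      have h1 : Nat.find hex ≤ finrank ℂ V' :=
        Nat.find_min' hex ⟨V', ⟨hle.trans hV₀W, hinv', hne'⟩, rfl⟩
      exact Submodule.eq_of_le_of_finrank_le hle (le_trans (le_of_eq hV₀rank) h1)
    have hV₀span := minimal_le_Cspan π hcomp hV₀inv hV₀ne hmin
    set W' := W ⊓ V₀ᗮ with hW'
    have hW'inv : LInv W' := fun g u hu => ⟨hInv g u hu.1, LInv_orthogonal hV₀inv g u hu.2⟩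
    have hW'lt : W' < W := by
      refine lt_of_le_of_ne inf_le_left ?_
      intro hcontra
      have hle : V₀ ≤ V₀ᗮ := by
        intro v hv
        have : v ∈ W' := hcontra ▸ (hV₀W hv)
        exact this.2
      have hbot' : V₀ = ⊥ := by
        rw [← le_bot_iff]
        intro v hv
        have h0 : (inner ℂ v v : ℂ) = 0 := (hle hv) v hv
        rw [inner_self_eq_zero] at h0
        rw [h0]; exact Submodule.zero_mem _
      exact hV₀ne hbot'
    have hW'rank : finrank ℂ W' ≤ m :=
      Nat.lt_succ_iff.mp (lt_of_lt_of_le (Submodule.finrank_lt_finrank_of_lt hW'lt) hr)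
    have hp : ((V₀.orthogonalProjectionOnto f : Esp' G) : G → ℂ) ∈ Cspan π :=
      hV₀span _ (V₀.orthogonalProjectionOnto f).2
    have hq : (f - (V₀.orthogonalProjectionOnto f : Esp' G)) ∈ W' :=
      ⟨W.sub_mem hf (hV₀W (V₀.orthogonalProjectionOnto f).2),
        V₀.sub_starProjection_mem_orthogonal f⟩
    have hq' := ih W' hW'rank hW'inv _ hq
    have hsplit : f = (V₀.orthogonalProjectionOnto f : Esp' G) +
        (f - (V₀.orthogonalProjectionOnto f : Esp' G)) := by abel
    rw [hsplit]
    exact Submodule.add_mem _ hp hq'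

lemma coeff_span_top
    (hcomp : ∀ (d' : ℕ) (σ : URep G d'), URepIrreducible σ → ∃ α, UEquiv σ (π α)) :
    ∀ f : G → ℂ, f ∈ Cspan π := by
  intro f
  exact linv_le_Cspan π hcomp (finrank ℂ (⊤ : Submodule ℂ (Esp' G)))
    ⊤ (le_of_eq rfl) (fun g u _ => trivial) (WithLp.toLp 2 f) trivial
end main

end AuxPW


section Glue

lemma mem_eigSp_iff {d : ℕ} (M : Matrix (Fin d) (Fin d) ℂ) (lam : ℝ) (X : Fin d → ℂ) :
    X ∈ eigSp M lam ↔ IsEigvec M lam X := by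
  simp only [eigSp, LinearMap.mem_ker, LinearMap.sub_apply, LinearMap.smul_apply,
    LinearMap.id_apply, sub_eq_zero, IsEigvec, Matrix.mulVecLin_apply]

lemma Theta_eq_ThetaL {G : Type*} [Group G] {d : ℕ} (π : URep G d) (i : Fin d)
    (X : Fin d → ℂ) : Theta π i X = ThetaL π i X := rfl

lemma Theta_single {G : Type*} [Group G] {d : ℕ} (π : URep G d) (i : Fin d) (k : Fin d) :
    Theta π i (Pi.single k 1) = coeff π k i := by
  funext g
  simp [Theta, Pi.single_apply]

lemma Theta_smul {G : Type*} [Group G] {d : ℕ} (π : URep G d) (i : Fin d)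
    (c : ℂ) (X : Fin d → ℂ) : Theta π i (c • X) = c • Theta π i X := by
  rw [Theta_eq_ThetaL, Theta_eq_ThetaL, map_smul]

end Glue

/-- Given a complete list `(π^α)` of pairwise inequivalent irreducible unitary
representations of `𝕊_n` and, for each `α`, `i` and eigenvalue `λ` of `π^α(S)`, a frame
`F^{α,λ}_i` for `E_λ(π^α(S))`, the collection `Φ = {Θ̃_{π^α,i,λ}(ψ)}` is a frame for
`L²(𝕊_n)` and every element of `Φ` belongs to some `Z_{π^α,i,λ}`. -/
theorem stmt14 {n : ℕ} (hn : 1 ≤ n) (S : Finset (Equiv.Perm (Fin n)))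
    (hS : ∀ s ∈ S, s⁻¹ ∈ S) {A : Type*} [Fintype A] {d : A → ℕ}
    (π : ∀ α : A, URep (Equiv.Perm (Fin n)) (d α))
    (hirr : ∀ α, URepIrreducible (π α))
    (hpair : ∀ α β, α ≠ β → ¬ UEquiv (π α) (π β))
    (hcomplete : ∀ (d' : ℕ) (σ : URep (Equiv.Perm (Fin n)) d'),
        URepIrreducible σ → ∃ α, UEquiv σ (π α))
    (Λ : A → Finset ℝ) (hΛ : ∀ α (lam : ℝ), lam ∈ Λ α ↔ IsEigval (repSum (π α) S) lam)
    {ι : (α : A) → Fin (d α) → ℝ → Type*} [∀ α i lam, Fintype (ι α i lam)]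
    (F : (α : A) → (i : Fin (d α)) → (lam : ℝ) → ι α i lam → (Fin (d α) → ℂ))
    (hF : ∀ α (i : Fin (d α)) (lam : ℝ), lam ∈ Λ α →
        IsFrameIn (F α i lam) {X | IsEigvec (repSum (π α) S) lam X}) :
    IsFrameIn
      (fun p : Σ α : A, Σ i : Fin (d α), Σ lam : (Λ α), ι α i (lam : ℝ) =>
        ThetaT n (π p.1) p.2.1 (F p.1 p.2.1 (p.2.2.1 : ℝ) p.2.2.2))
      (Set.univ) ∧
    ∀ p : Σ α : A, Σ i : Fin (d α), Σ lam : (Λ α), ι α i (lam : ℝ),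
      ThetaT n (π p.1) p.2.1 (F p.1 p.2.1 (p.2.2.1 : ℝ) p.2.2.2) ∈
        Zset (π p.1) p.2.1 (p.2.2.1 : ℝ) S  := by
  classical
  have hfac : (0:ℝ) < n.factorial := by
    have := Nat.factorial_pos n
    exact_mod_cast this
  set c : A → ℝ := fun α => Real.sqrt ((d α : ℝ) / n.factorial) with hc
  have hcpos : ∀ α, 0 < c α := fun α =>
    Real.sqrt_pos.mpr (div_pos (by exact_mod_cast (hirr α).1) hfac)
  set Ψ := fun p : Σ α : A, Σ i : Fin (d α), Σ lam : (Λ α), ι α i (lam : ℝ) =>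
      ThetaT n (π p.1) p.2.1 (F p.1 p.2.1 (p.2.2.1 : ℝ) p.2.2.2) with hΨ
  have hΨeq : ∀ (α : A) (i : Fin (d α)) (lam : ℝ) (hlam : lam ∈ Λ α) (t : ι α i lam),
      Ψ ⟨α, i, ⟨lam, hlam⟩, t⟩ = (c α : ℂ) • Theta (π α) i (F α i lam t) := by
    intro α i lam hlam t
    funext g
    show (Real.sqrt ((d α : ℝ) / n.factorial) : ℂ) * Theta (π α) i (F α i lam t) g = _
    rw [Pi.smul_apply, smul_eq_mul]
  constructor
  · -- the frame property
    have hspan : Submodule.span ℂ (Set.range Ψ) =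
        (⊤ : Submodule ℂ (Equiv.Perm (Fin n) → ℂ)) := by
      rw [eq_top_iff]
      intro f _
      have hmem := coeff_span_top π hcomplete f
      refine Submodule.span_le.mpr ?_ hmem
      rintro _ ⟨α, p, q, rfl⟩
      -- coeff (π α) p q ∈ span (range Ψ)
      set M := repSum (π α) S with hM
      have hHerm : M.IsHermitian := repSum_isHermitian (π α) S hS
      have hEV := span_eigvecs M hHerm
      have h1 : Pi.single p (1:ℂ) ∈
          Submodule.span ℂ {X : Fin (d α) → ℂ | ∃ lam : ℝ, IsEigval M lam ∧ IsEigvec M lam X} := by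
        rw [hEV]; trivial
      rw [← Theta_single (π α) q p, Theta_eq_ThetaL]
      have h3 := Submodule.mem_map_of_mem (f := ThetaL (π α) q) h1
      rw [Submodule.map_span] at h3
      refine Submodule.span_le.mpr ?_ h3
      rintro _ ⟨X, ⟨lam, hval, hvec⟩, rfl⟩
      have hlam : lam ∈ Λ α := (hΛ α lam).mpr hval
      obtain ⟨Afr, Bfr, hFr⟩ := hF α q lam hlam
      have hFr' : IsFrameOn (F α q lam)
          {v : Fin (d α) → ℂ | toE v ∈ ((eigSp M lam).comap (WithLp.linearEquiv 2 ℂ (Fin (d α) → ℂ)).toLinearMap)}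
          Afr Bfr := by
        have hset : {v : Fin (d α) → ℂ | toE v ∈
            ((eigSp M lam).comap (WithLp.linearEquiv 2 ℂ (Fin (d α) → ℂ)).toLinearMap)} =
            {X : Fin (d α) → ℂ | IsEigvec M lam X} := by
          ext v; exact mem_eigSp_iff M lam v
        rw [hset]
        exact hFr
      have hXspan : toE X ∈
          Submodule.span ℂ (Set.range fun t => toE (F α q lam t)) := by
        refine frame_span (F α q lam) ((eigSp M lam).comap (WithLp.linearEquiv 2 ℂ (Fin (d α) → ℂ)).toLinearMap) hFr' ?_
        exact (mem_eigSp_iff M lam X).mpr hvec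
      have h5 := Submodule.mem_map_of_mem (f := (ThetaL (π α) q).comp (WithLp.linearEquiv 2 ℂ (Fin (d α) → ℂ)).toLinearMap) hXspan
      rw [Submodule.map_span] at h5
      refine Submodule.span_le.mpr ?_ h5
      rintro _ ⟨_, ⟨t, rfl⟩, rfl⟩
      have heq : (ThetaL (π α) q).comp (WithLp.linearEquiv 2 ℂ (Fin (d α) → ℂ)).toLinearMap (toE (F α q lam t)) =
          ((c α : ℂ))⁻¹ • Ψ ⟨α, q, ⟨lam, hlam⟩, t⟩ := by
        rw [hΨeq α q lam hlam t, smul_smul, inv_mul_cancel₀, one_smul, Theta_eq_ThetaL]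
        · rfl
        · exact_mod_cast (hcpos α).ne'
      rw [heq]
      exact Submodule.smul_mem _ _ (Submodule.subset_span ⟨⟨α, q, ⟨lam, hlam⟩, t⟩, rfl⟩)
    exact span_top_isFrame Ψ (by
      have h := congrArg (Submodule.map (WithLp.linearEquiv 2 ℂ (Equiv.Perm (Fin n) → ℂ)).symm.toLinearMap) hspan
      rw [Submodule.map_span, Submodule.map_top,
        LinearMap.range_eq_top.mpr (WithLp.linearEquiv 2 ℂ (Equiv.Perm (Fin n) → ℂ)).symm.surjective,
        ← Set.range_comp] at h
      exact h)
  · -- Zset membership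
    rintro ⟨α, i, ⟨lam, hlam⟩, t⟩
    obtain ⟨Afr, Bfr, hFr⟩ := hF α i lam hlam
    have hX : IsEigvec (repSum (π α) S) lam (F α i lam t) := hFr.2.2.1 t
    refine ⟨(c α : ℂ) • F α i lam t, ?_, ?_⟩
    · unfold IsEigvec at hX ⊢
      rw [Matrix.mulVec_smul, hX, smul_comm]
    · rw [Theta_smul]
      exact hΨeq α i lam hlam t
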